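/- arXiv:2601.01853 — 3 statements merged into one kernel-verified Lean document; each statement's English description precedes it below -/
import Mathlib

section
/- Define h(x) := √(2L)·(1 + σ₀α₀L/√S₀)·α₀·√x + (1 + σ₀α₀L/√S₀)·Lα₀²/2. Then for AdaGrad-Norm, almost surely ĝ(θ_{n+1}) − ĝ(θ_n) ≤ h(ĝ(θ_n)) for all n ≥ 1; moreover there exists a constant C₀ > 0 such that h(x) < x/2 for all x ≥ C₀. -/
open MeasureTheory Filter InnerProductSpace

section aux
variable {E : Type*} [NormedAddCommGroup E] [InnerProductSpace ℝ E] [CompleteSpace E]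

theorem fderiv_eq_inner_gradient' (g : E → ℝ) (hg : ContDiff ℝ 1 g) (z v : E) :
    fderiv ℝ g z v = ⟪gradient g z, v⟫_ℝ := by
  have h := (hg.differentiable one_ne_zero z).hasGradientAt
  have h2 : HasFDerivAt g (toDualMap ℝ E (gradient g z)) z := h
  rw [h2.fderiv]
  simp [InnerProductSpace.toDualMap_apply_apply]

theorem descent_lemma' (g : E → ℝ) (hg : ContDiff ℝ 1 g) {L : ℝ}
    (hsm : ∀ x y, ‖gradient g x - gradient g y‖ ≤ L * ‖x - y‖) (x y : E) :
    g y ≤ g x + ⟪gradient g x, y - x⟫_ℝ + L / 2 * ‖y - x‖ ^ 2 := by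
  set v := y - x with hv
  have hdg := hg.differentiable one_ne_zero
  have hφ : ∀ t : ℝ, HasDerivAt (fun t : ℝ => g (x + t • v))
      (⟪gradient g (x + t • v), v⟫_ℝ) t := by
    intro t
    have hc : HasDerivAt (fun t : ℝ => x + t • v) v t := by
      simpa using ((hasDerivAt_id t).smul_const v).const_add x
    have hgf : HasFDerivAt g (fderiv ℝ g (x + t • v)) (x + t • v) :=
      (hdg (x + t • v)).hasFDerivAt
    have := hgf.comp_hasDerivAt t hc
    rwa [fderiv_eq_inner_gradient' g hg] at this
  set F : ℝ → ℝ := fun t => g x + t * ⟪gradient g x, v⟫_ℝ + L * t ^ 2 * ‖v‖ ^ 2 / 2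
      - g (x + t • v) with hF
  have hF' : ∀ t : ℝ, HasDerivAt F
      (⟪gradient g x, v⟫_ℝ + L * (2 * t) * ‖v‖ ^ 2 / 2 - ⟪gradient g (x + t • v), v⟫_ℝ) t := by
    intro t
    have h1 : HasDerivAt (fun t : ℝ => g x + t * ⟪gradient g x, v⟫_ℝ + L * t ^ 2 * ‖v‖ ^ 2 / 2)
        (⟪gradient g x, v⟫_ℝ + L * (2 * t) * ‖v‖ ^ 2 / 2) t := by
      have ha : HasDerivAt (fun t : ℝ => t * ⟪gradient g x, v⟫_ℝ) ⟪gradient g x, v⟫_ℝ t := by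
        simpa using (hasDerivAt_id t).mul_const ⟪gradient g x, v⟫_ℝ
      have hb : HasDerivAt (fun t : ℝ => L * t ^ 2 * ‖v‖ ^ 2 / 2)
          (L * (2 * t) * ‖v‖ ^ 2 / 2) t := by
        simpa using (((hasDerivAt_pow 2 t).const_mul L).mul_const (‖v‖ ^ 2)).div_const 2
      exact (ha.const_add (g x)).add hb
    exact h1.sub (hφ t)
  have hmono : MonotoneOn F (Set.Icc (0:ℝ) 1) := by
    apply monotoneOn_of_deriv_nonneg (convex_Icc 0 1)
    · exact fun t _ => ((hF' t).continuousAt).continuousWithinAt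
    · exact fun t _ => ((hF' t).differentiableAt).differentiableWithinAt
    · intro t ht
      rw [interior_Icc] at ht
      rw [(hF' t).deriv]
      have key : ⟪gradient g (x + t • v), v⟫_ℝ - ⟪gradient g x, v⟫_ℝ ≤ L * t * ‖v‖ ^ 2 := by
        rw [← inner_sub_left]
        calc ⟪gradient g (x + t • v) - gradient g x, v⟫_ℝ
            ≤ ‖gradient g (x + t • v) - gradient g x‖ * ‖v‖ := real_inner_le_norm _ _
          _ ≤ L * ‖(x + t • v) - x‖ * ‖v‖ := by
              exact mul_le_mul_of_nonneg_right (hsm _ _) (norm_nonneg v)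
          _ = L * (|t| * ‖v‖) * ‖v‖ := by rw [add_sub_cancel_left, norm_smul]; norm_num
          _ = L * t * ‖v‖ ^ 2 := by rw [abs_of_pos ht.1]; ring
      nlinarith [key]
  have h01 := hmono (Set.mem_Icc.2 ⟨le_refl 0, zero_le_one⟩)
      (Set.mem_Icc.2 ⟨zero_le_one, le_refl 1⟩) zero_le_one
  simp only [hF] at h01
  simp only [zero_smul, add_zero, one_smul] at h01
  have hxy : x + v = y := by rw [hv]; abel
  rw [hxy] at h01
  nlinarith [h01]

theorem grad_sq_le' (g : E → ℝ) (hg : ContDiff ℝ 1 g) {L : ℝ} (hL : 0 < L)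
    (hnn : ∀ x, 0 ≤ g x)
    (hsm : ∀ x y, ‖gradient g x - gradient g y‖ ≤ L * ‖x - y‖) (x : E) :
    ‖gradient g x‖ ^ 2 ≤ 2 * L * g x := by
  have h := descent_lemma' g hg hsm x (x - L⁻¹ • gradient g x)
  have h2 : (x - L⁻¹ • gradient g x) - x = -(L⁻¹ • gradient g x) := by abel
  rw [h2] at h
  have hin : ⟪gradient g x, -(L⁻¹ • gradient g x)⟫_ℝ = -(L⁻¹ * ‖gradient g x‖ ^ 2) := by
    rw [inner_neg_right, real_inner_smul_right, real_inner_self_eq_norm_sq]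
  have hnr : ‖-(L⁻¹ • gradient g x)‖ ^ 2 = L⁻¹ ^ 2 * ‖gradient g x‖ ^ 2 := by
    rw [norm_neg, norm_smul, mul_pow]
    congr 1
    rw [Real.norm_eq_abs, sq_abs]
  rw [hin, hnr] at h
  have h0 := hnn (x - L⁻¹ • gradient g x)
  have hLne : L ≠ 0 := hL.ne'
  have e0 : L / 2 * (L⁻¹ ^ 2 * ‖gradient g x‖ ^ 2) = ‖gradient g x‖ ^ 2 / (2 * L) := by
    field_simp
  rw [e0] at h
  have e2 : L⁻¹ * ‖gradient g x‖ ^ 2 = ‖gradient g x‖ ^ 2 / L := by ring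
  rw [e2] at h
  have hL2 : 0 < 2 * L := by linarith
  have e1 : ‖gradient g x‖ ^ 2 / L = 2 * (‖gradient g x‖ ^ 2 / (2 * L)) := by
    field_simp
  rw [e1] at h
  have key : ‖gradient g x‖ ^ 2 / (2 * L) ≤ g x := by linarith
  rw [div_le_iff₀ hL2] at key
  linarith
end aux

set_option maxHeartbeats 1000000 in
/-- Lemma 3.5: with `h(x) = √(2L)(1 + σ₀α₀L/√S₀)α₀√x + (1 + σ₀α₀L/√S₀)Lα₀²/2`,
almost surely `ĝ(θ_{n+1}) - ĝ(θ_n) ≤ h(ĝ(θ_n))` for all `n ≥ 1`, and there exists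
`C₀ > 0` with `h(x) < x/2` for all `x ≥ C₀`. -/
theorem adagrad_norm_adjacent_lyapunov_bound
    {d : ℕ} {Ω : Type*} {m0 : MeasurableSpace Ω} (P : Measure Ω) [IsProbabilityMeasure P]
    (ℱ : Filtration ℕ m0)
    (g : EuclideanSpace ℝ (Fin d) → ℝ)
    (L σ₀ α₀ S₀ : ℝ)
    (hL : 0 < L) (hσ₀ : 0 ≤ σ₀) (hα₀ : 0 < α₀) (hS₀ : 0 < S₀)
    (hg_diff : ContDiff ℝ 1 g)
    (hg_nonneg : ∀ x, 0 ≤ g x)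
    (hg_smooth : ∀ x y, ‖gradient g x - gradient g y‖ ≤ L * ‖x - y‖)
    (θ₁ : EuclideanSpace ℝ (Fin d))
    (G θ : ℕ → Ω → EuclideanSpace ℝ (Fin d))
    (S : ℕ → Ω → ℝ)
    (hG_meas : ∀ n, 1 ≤ n → StronglyMeasurable[ℱ n] (G n))
    (hθ_init : ∀ ω, θ 1 ω = θ₁)
    (hS_init : ∀ ω, S 0 ω = S₀)
    (hS_rec : ∀ n, 1 ≤ n → ∀ ω, S n ω = S (n - 1) ω + ‖G n ω‖ ^ 2)
    (hθ_rec : ∀ n, 1 ≤ n → ∀ ω,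
      θ (n + 1) ω = θ n ω - (α₀ / Real.sqrt (S n ω)) • G n ω) :
    (∀ᵐ ω ∂P, ∀ n, 1 ≤ n →
        (g (θ (n + 1) ω)
            + σ₀ * α₀ / 2 * (‖gradient g (θ (n + 1) ω)‖ ^ 2 / Real.sqrt (S n ω)))
          - (g (θ n ω)
            + σ₀ * α₀ / 2 * (‖gradient g (θ n ω)‖ ^ 2 / Real.sqrt (S (n - 1) ω)))
        ≤ Real.sqrt (2 * L) * (1 + σ₀ * α₀ * L / Real.sqrt S₀) * α₀
              * Real.sqrt (g (θ n ω)
                  + σ₀ * α₀ / 2 * (‖gradient g (θ n ω)‖ ^ 2 / Real.sqrt (S (n - 1) ω)))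
            + (1 + σ₀ * α₀ * L / Real.sqrt S₀) * (L * α₀ ^ 2 / 2)) ∧
    (∃ C₀ : ℝ, 0 < C₀ ∧ ∀ x : ℝ, C₀ ≤ x →
        Real.sqrt (2 * L) * (1 + σ₀ * α₀ * L / Real.sqrt S₀) * α₀ * Real.sqrt x
            + (1 + σ₀ * α₀ * L / Real.sqrt S₀) * (L * α₀ ^ 2 / 2)
          < x / 2) := by
  have hK0 : (0:ℝ) ≤ σ₀ * α₀ * L / Real.sqrt S₀ :=
    div_nonneg (mul_nonneg (mul_nonneg hσ₀ hα₀.le) hL.le) (Real.sqrt_nonneg _)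
  set K : ℝ := 1 + σ₀ * α₀ * L / Real.sqrt S₀ with hKdef
  have hK1 : (1:ℝ) ≤ K := by rw [hKdef]; linarith
  have hKpos : (0:ℝ) < K := by linarith
  clear_value K
  constructor
  · refine ae_of_all P ?_
    intro ω n hn
    have hSge : ∀ m, S₀ ≤ S m ω := by
      intro m
      induction m with
      | zero => rw [hS_init]
      | succ k ih =>
          have hr := hS_rec (k + 1) (Nat.succ_le_succ (Nat.zero_le k)) ω
          simp only [Nat.add_sub_cancel] at hr
          linarith only [ih, hr, sq_nonneg ‖G (k + 1) ω‖]
    set s := S (n - 1) ω with hsdef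
    set s' := S n ω with hs'def
    have hS0s : S₀ ≤ s := hSge (n - 1)
    have hs : 0 < s := lt_of_lt_of_le hS₀ hS0s
    have hrec : s' = s + ‖G n ω‖ ^ 2 := hS_rec n hn ω
    have hss' : s ≤ s' := by linarith only [hrec, sq_nonneg ‖G n ω‖]
    have hs' : 0 < s' := lt_of_lt_of_le hs hss'
    have hrs : 0 < Real.sqrt s := Real.sqrt_pos.2 hs
    have hrs' : 0 < Real.sqrt s' := Real.sqrt_pos.2 hs'
    have hrss' : Real.sqrt s ≤ Real.sqrt s' := Real.sqrt_le_sqrt hss'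
    have hrS0 : 0 < Real.sqrt S₀ := Real.sqrt_pos.2 hS₀
    have hrS0s : Real.sqrt S₀ ≤ Real.sqrt s := Real.sqrt_le_sqrt hS0s
    set x := θ n ω with hxdef
    set y := θ (n + 1) ω with hydef
    have hy : y = x - (α₀ / Real.sqrt s') • G n ω := hθ_rec n hn ω
    have hyx : y - x = -((α₀ / Real.sqrt s') • G n ω) := by rw [hy]; abel
    have hGle : ‖G n ω‖ ≤ Real.sqrt s' := by
      rw [show ‖G n ω‖ = Real.sqrt (‖G n ω‖ ^ 2) from (Real.sqrt_sq (norm_nonneg _)).symm]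
      exact Real.sqrt_le_sqrt (by linarith only [hrec, hs.le])
    set Δ := ‖y - x‖ with hΔdef
    have hΔeq : Δ = α₀ / Real.sqrt s' * ‖G n ω‖ := by
      rw [hΔdef, hyx, norm_neg, norm_smul, Real.norm_eq_abs,
        abs_of_nonneg (div_nonneg hα₀.le hrs'.le)]
    have hΔ0 : 0 ≤ Δ := norm_nonneg _
    have hΔle : Δ ≤ α₀ := by
      rw [hΔeq, div_mul_eq_mul_div, div_le_iff₀ hrs']
      exact mul_le_mul_of_nonneg_left hGle hα₀.le
    set A := ‖gradient g x‖ with hAdef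
    set B := ‖gradient g y‖ with hBdef
    have hA0 : 0 ≤ A := norm_nonneg _
    have hB0 : 0 ≤ B := norm_nonneg _
    have hgrad : A ^ 2 ≤ 2 * L * g x := grad_sq_le' g hg_diff hL hg_nonneg hg_smooth x
    have h1 : g y ≤ g x + A * Δ + L / 2 * Δ ^ 2 := by
      have hd := descent_lemma' g hg_diff hg_smooth x y
      have hcs := real_inner_le_norm (gradient g x) (y - x)
      rw [← hΔdef] at hd hcs
      rw [← hAdef] at hcs
      linarith only [hd, hcs]
    have hBle : B ≤ A + L * Δ := by
      have hsm := hg_smooth y x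
      have htri := norm_sub_norm_le (gradient g y) (gradient g x)
      rw [← hΔdef] at hsm
      rw [← hAdef, ← hBdef] at htri
      linarith only [hsm, htri]
    clear_value s s' x y Δ A B
    have hB2 : B ^ 2 ≤ A ^ 2 + 2 * A * (L * Δ) + (L * Δ) ^ 2 := by
      linarith only [pow_le_pow_left₀ hB0 hBle 2]
    -- numerator nonnegativity
    have hnum : (0:ℝ) ≤ 2 * A * (L * Δ) + (L * Δ) ^ 2 := by
      have h2 := mul_nonneg (mul_nonneg (by norm_num : (0:ℝ) ≤ 2) hA0)
        (mul_nonneg hL.le hΔ0)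
      linarith only [h2, sq_nonneg (L * Δ)]
    have hnum2 : (0:ℝ) ≤ A ^ 2 + 2 * A * (L * Δ) + (L * Δ) ^ 2 := by
      linarith only [hnum, sq_nonneg A]
    -- div chain
    have hBdiv : B ^ 2 / Real.sqrt s' ≤ (A ^ 2 + 2 * A * (L * Δ) + (L * Δ) ^ 2) / Real.sqrt s :=
      div_le_div₀ hnum2 hB2 hrs hrss'
    have hsplit : (A ^ 2 + 2 * A * (L * Δ) + (L * Δ) ^ 2) / Real.sqrt s
        = A ^ 2 / Real.sqrt s + (2 * A * (L * Δ) + (L * Δ) ^ 2) / Real.sqrt s := by ring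
    have hmonoS0 : (2 * A * (L * Δ) + (L * Δ) ^ 2) / Real.sqrt s
        ≤ (2 * A * (L * Δ) + (L * Δ) ^ 2) / Real.sqrt S₀ := by
      gcongr <;> first | exact hnum | exact hrS0 | exact hrS0s
    have hΔΔ : 2 * A * (L * Δ) + (L * Δ) ^ 2 ≤ 2 * A * (L * α₀) + (L * α₀) ^ 2 := by
      have p1 : (0:ℝ) ≤ 2 * (A * L) * (α₀ - Δ) :=
        mul_nonneg (mul_nonneg (by norm_num) (mul_nonneg hA0 hL.le)) (sub_nonneg.2 hΔle)
      have p2 : (0:ℝ) ≤ (L * L) * ((α₀ + Δ) * (α₀ - Δ)) :=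
        mul_nonneg (mul_nonneg hL.le hL.le)
          (mul_nonneg (by linarith only [hα₀.le, hΔ0]) (sub_nonneg.2 hΔle))
      linarith only [p1, p2]
    have hc : (0:ℝ) ≤ σ₀ * α₀ / 2 :=
      div_nonneg (mul_nonneg hσ₀ hα₀.le) (by norm_num)
    -- Lyapunov value at x
    set Ghat : ℝ := g x + σ₀ * α₀ / 2 * (A ^ 2 / Real.sqrt s) with hGhatdef
    have hGhat_aux : (0:ℝ) ≤ σ₀ * α₀ / 2 * (A ^ 2 / Real.sqrt s) :=
      mul_nonneg hc (div_nonneg (sq_nonneg A) hrs.le)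
    have hgxG : g x ≤ Ghat := by rw [hGhatdef]; linarith
    have hGhat0 : 0 ≤ Ghat := le_trans (hg_nonneg x) hgxG
    have hA2G : A ^ 2 ≤ 2 * L * Ghat := by
      have h2 := mul_le_mul_of_nonneg_left hgxG (by linarith only [hL.le] : (0:ℝ) ≤ 2 * L)
      linarith only [hgrad, h2]
    have hAle : A ≤ Real.sqrt (2 * L) * Real.sqrt Ghat := by
      calc A = Real.sqrt (A ^ 2) := (Real.sqrt_sq hA0).symm
        _ ≤ Real.sqrt (2 * L * Ghat) := Real.sqrt_le_sqrt hA2G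
        _ = Real.sqrt (2 * L) * Real.sqrt Ghat := Real.sqrt_mul (by linarith only [hL.le]) _
    -- bound Δ by α₀ in the linear-quadratic part
    have hT : A * Δ + L / 2 * Δ ^ 2 ≤ A * α₀ + L / 2 * α₀ ^ 2 := by
      have p1 : (0:ℝ) ≤ A * (α₀ - Δ) := mul_nonneg hA0 (sub_nonneg.2 hΔle)
      have p2 : (0:ℝ) ≤ (L / 2) * ((α₀ + Δ) * (α₀ - Δ)) :=
        mul_nonneg (by linarith only [hL.le])
          (mul_nonneg (by linarith only [hα₀.le, hΔ0]) (sub_nonneg.2 hΔle))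
      linarith only [p1, p2]
    -- target inequality
    have hchain : g y + σ₀ * α₀ / 2 * (B ^ 2 / Real.sqrt s')
        - (g x + σ₀ * α₀ / 2 * (A ^ 2 / Real.sqrt s))
        ≤ A * α₀ + L / 2 * α₀ ^ 2
          + σ₀ * α₀ / 2 * ((2 * A * (L * α₀) + (L * α₀) ^ 2) / Real.sqrt S₀) := by
      have h5 : (2 * A * (L * Δ) + (L * Δ) ^ 2) / Real.sqrt S₀
          ≤ (2 * A * (L * α₀) + (L * α₀) ^ 2) / Real.sqrt S₀ := by
        gcongr <;> first | exact hrS0 | exact hΔΔ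
      have h6 := le_trans hmonoS0 h5
      have h7 := mul_le_mul_of_nonneg_left h6 hc
      have h8 := mul_le_mul_of_nonneg_left hBdiv hc
      rw [hsplit] at h8
      have h9 : σ₀ * α₀ / 2 * (A ^ 2 / Real.sqrt s + (2 * A * (L * Δ) + (L * Δ) ^ 2) / Real.sqrt s)
          = σ₀ * α₀ / 2 * (A ^ 2 / Real.sqrt s)
            + σ₀ * α₀ / 2 * ((2 * A * (L * Δ) + (L * Δ) ^ 2) / Real.sqrt s) := by ring
      rw [h9] at h8
      linarith only [h1, hT, h7, h8]
    have hfinal : A * α₀ + L / 2 * α₀ ^ 2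
          + σ₀ * α₀ / 2 * ((2 * A * (L * α₀) + (L * α₀) ^ 2) / Real.sqrt S₀)
        = K * (A * α₀) + K * (L * α₀ ^ 2 / 2) := by
      rw [hKdef]; ring
    have hAK : K * (A * α₀) ≤ Real.sqrt (2 * L) * K * α₀ * Real.sqrt Ghat := by
      have h2 := mul_le_mul_of_nonneg_left hAle (mul_nonneg hKpos.le hα₀.le)
      linarith only [h2]
    calc g y + σ₀ * α₀ / 2 * (B ^ 2 / Real.sqrt s')
          - (g x + σ₀ * α₀ / 2 * (A ^ 2 / Real.sqrt s))
        ≤ K * (A * α₀) + K * (L * α₀ ^ 2 / 2) := by rw [← hfinal]; exact hchain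
      _ ≤ Real.sqrt (2 * L) * K * α₀ * Real.sqrt Ghat + K * (L * α₀ ^ 2 / 2) := by
          linarith only [hAK]
  · -- the constant C₀
    have h2L : 0 < Real.sqrt (2 * L) := Real.sqrt_pos.2 (by linarith)
    set A' : ℝ := Real.sqrt (2 * L) * K * α₀ with hA'def
    set B' : ℝ := K * (L * α₀ ^ 2 / 2) with hB'def
    have hA'pos : 0 < A' := by rw [hA'def]; exact mul_pos (mul_pos h2L hKpos) hα₀
    have hB'pos : 0 < B' := by
      rw [hB'def]; exact mul_pos hKpos (div_pos (mul_pos hL (pow_pos hα₀ 2)) two_pos)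
    clear_value A' B'
    refine ⟨max (64 * A' ^ 2 + 1) (8 * B' + 1),
      lt_of_lt_of_le (by positivity) (le_max_left _ _), ?_⟩
    intro x hx
    have hx1 : 64 * A' ^ 2 + 1 ≤ x := le_trans (le_max_left _ _) hx
    have hx2 : 8 * B' + 1 ≤ x := le_trans (le_max_right _ _) hx
    have hx0 : (0:ℝ) ≤ x := by linarith only [hx1, sq_nonneg A']
    have hsq : Real.sqrt x * Real.sqrt x = x := Real.mul_self_sqrt hx0
    have h8A : 8 * A' ≤ Real.sqrt x := by
      rw [show (8:ℝ) * A' = Real.sqrt ((8 * A') ^ 2) from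
        (Real.sqrt_sq (by linarith only [hA'pos.le])).symm]
      exact Real.sqrt_le_sqrt (by linarith only [hx1])
    have hprod := mul_le_mul_of_nonneg_right h8A (Real.sqrt_nonneg x)
    linarith only [hprod, hsq, hx2, hB'pos]
end

section
/- Divergence of the AdaGrad-Norm step-size series: almost surely, ∑_{n=1}^∞ α₀/√S_n = +∞. -/
open MeasureTheory Filter Topology

lemma aux_sqrt_add_le {a x : ℝ} (ha : 0 < a) (hx : 0 ≤ x) :
    Real.sqrt (a + x) ≤ Real.sqrt a + x / (2 * Real.sqrt a) := by
  have hsa : 0 < Real.sqrt a := Real.sqrt_pos.mpr ha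
  have h1 : Real.sqrt a ^ 2 = a := Real.sq_sqrt ha.le
  have h2 : 0 ≤ Real.sqrt a + x / (2 * Real.sqrt a) := by positivity
  refine Real.sqrt_le_sqrt ?_ |>.trans (le_of_eq (Real.sqrt_sq h2))
  have : (Real.sqrt a + x / (2 * Real.sqrt a))^2
      = a + x + (x / (2 * Real.sqrt a))^2 := by
    field_simp
    ring_nf
    nlinarith [h1]
  nlinarith [sq_nonneg (x / (2*Real.sqrt a))]

lemma aux_ratio_le {s t : ℝ} (hs : 0 < s) (hst : s ≤ t) :
    (t - s) / Real.sqrt t ≤ 2 * (Real.sqrt t - Real.sqrt s) := by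
  have ht : 0 < t := lt_of_lt_of_le hs hst
  have hst' : Real.sqrt s ≤ Real.sqrt t := Real.sqrt_le_sqrt hst
  have h1 : Real.sqrt s ^ 2 = s := Real.sq_sqrt hs.le
  have h2 : Real.sqrt t ^ 2 = t := Real.sq_sqrt ht.le
  have hsq : 0 < Real.sqrt t := Real.sqrt_pos.mpr ht
  rw [div_le_iff₀ hsq]
  nlinarith [Real.sqrt_nonneg s]

set_option maxHeartbeats 2000000 in
/-- Lemma 5.3: the AdaGrad-Norm step-size series diverges almost surely:
`∑_{n=1}^∞ α₀/√S_n = +∞` a.s. -/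
theorem adagrad_norm_stepsize_series_diverges
    {d : ℕ} {Ω : Type*} {m0 : MeasurableSpace Ω} (P : Measure Ω) [IsProbabilityMeasure P]
    (ℱ : Filtration ℕ m0)
    (g : EuclideanSpace ℝ (Fin d) → ℝ)
    (L σ₀ σ₁ α₀ S₀ δt : ℝ)
    (hL : 0 < L) (hσ₀ : 0 ≤ σ₀) (hσ₁ : 0 ≤ σ₁) (hα₀ : 0 < α₀) (hS₀ : 0 < S₀)
    (hg_diff : ContDiff ℝ 1 g)
    (hg_nonneg : ∀ x, 0 ≤ g x)
    (hg_smooth : ∀ x y, ‖gradient g x - gradient g y‖ ≤ L * ‖x - y‖)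
    (hδt : 0 < δt)
    (hflat : ∀ᶠ x in Bornology.cobounded (EuclideanSpace ℝ (Fin d)),
      δt < ‖gradient g x‖)
    (θ₁ : EuclideanSpace ℝ (Fin d))
    (G θ : ℕ → Ω → EuclideanSpace ℝ (Fin d))
    (S : ℕ → Ω → ℝ)
    (hG_meas : ∀ n, 1 ≤ n → StronglyMeasurable[ℱ n] (G n))
    (hG_int : ∀ n, 1 ≤ n → Integrable (G n) P)
    (hG_sq_int : ∀ n, 1 ≤ n → Integrable (fun ω => ‖G n ω‖ ^ 2) P)
    (hθ_adapted : ∀ n, 1 ≤ n → StronglyMeasurable[ℱ (n - 1)] (θ n))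
    (hθ_init : ∀ ω, θ 1 ω = θ₁)
    (hS_init : ∀ ω, S 0 ω = S₀)
    (hS_rec : ∀ n, 1 ≤ n → ∀ ω, S n ω = S (n - 1) ω + ‖G n ω‖ ^ 2)
    (hθ_rec : ∀ n, 1 ≤ n → ∀ ω,
      θ (n + 1) ω = θ n ω - (α₀ / Real.sqrt (S n ω)) • G n ω)
    (hG_unbiased : ∀ n, 1 ≤ n →
      P[G n | ℱ (n - 1)] =ᵐ[P] fun ω => gradient g (θ n ω))
    (hG_var : ∀ n, 1 ≤ n → ∀ᵐ ω ∂P,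
      (P[fun ω => ‖G n ω‖ ^ 2 | ℱ (n - 1)]) ω ≤ σ₀ * ‖gradient g (θ n ω)‖ ^ 2 + σ₁) :
    ∀ᵐ ω ∂P,
      Tendsto (fun N : ℕ => ∑ n ∈ Finset.range N, α₀ / Real.sqrt (S (n + 1) ω))
        atTop atTop := by
  classical
  -- basic recursions
  have hS_succ : ∀ n ω, S (n+1) ω = S n ω + ‖G (n+1) ω‖^2 := by
    intro n ω; simpa using hS_rec (n+1) (by omega) ω
  have hS_lb : ∀ n ω, S₀ ≤ S n ω := by
    intro n
    induction n with
    | zero => intro ω; rw [hS_init ω]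
    | succ n ih => intro ω; rw [hS_succ n ω]; nlinarith [ih ω, sq_nonneg ‖G (n+1) ω‖]
  have hS_pos : ∀ n ω, 0 < S n ω := fun n ω => lt_of_lt_of_le hS₀ (hS_lb n ω)
  have hsqS_pos : ∀ n ω, 0 < Real.sqrt (S n ω) := fun n ω => Real.sqrt_pos.mpr (hS_pos n ω)
  have hS_mono : ∀ ω, Monotone fun n => S n ω := by
    intro ω
    apply monotone_nat_of_le_succ
    intro n; rw [hS_succ n ω]; nlinarith [sq_nonneg ‖G (n+1) ω‖]
  set T : ℕ → Ω → ℝ := fun n ω => ∑ k ∈ Finset.range n, 1 / Real.sqrt (S (k+1) ω) with hT_def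
  have hT_mono : ∀ ω, Monotone fun n => T n ω := by
    intro ω
    apply monotone_nat_of_le_succ
    intro n
    rw [hT_def]
    simp only [Finset.sum_range_succ]
    have : 0 ≤ 1 / Real.sqrt (S (n+1) ω) := by positivity
    linarith
  have hT_nonneg : ∀ n ω, 0 ≤ T n ω := by
    intro n ω
    apply Finset.sum_nonneg
    intro k _; positivity
  -- L3 : sum of ‖G‖²/√S is at most 2 √S_n
  have hL3 : ∀ ω n, ∑ k ∈ Finset.range n, ‖G (k+1) ω‖^2 / Real.sqrt (S (k+1) ω)
      ≤ 2 * Real.sqrt (S n ω) := by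
    intro ω n
    induction n with
    | zero => simp [Real.sqrt_nonneg]
    | succ n ih =>
      rw [Finset.sum_range_succ]
      have h1 : ‖G (n+1) ω‖^2 = S (n+1) ω - S n ω := by rw [hS_succ n ω]; ring
      have h2 := aux_ratio_le (hS_pos n ω) (hS_mono ω (Nat.le_succ n))
      rw [h1]
      linarith
  -- Cauchy-Schwarz
  have hCS : ∀ ω n, (∑ k ∈ Finset.range n, ‖G (k+1) ω‖ / Real.sqrt (S (k+1) ω))^2
      ≤ T n ω * (2 * Real.sqrt (S n ω)) := by
    intro ω n
    have key := Finset.sum_mul_sq_le_sq_mul_sq (Finset.range n)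
      (fun k => Real.sqrt (1 / Real.sqrt (S (k+1) ω)))
      (fun k => ‖G (k+1) ω‖ * Real.sqrt (1 / Real.sqrt (S (k+1) ω)))
    have e1 : ∀ k, Real.sqrt (1 / Real.sqrt (S (k+1) ω)) *
        (‖G (k+1) ω‖ * Real.sqrt (1 / Real.sqrt (S (k+1) ω)))
        = ‖G (k+1) ω‖ / Real.sqrt (S (k+1) ω) := by
      intro k
      have : Real.sqrt (1 / Real.sqrt (S (k+1) ω)) * Real.sqrt (1 / Real.sqrt (S (k+1) ω))
          = 1 / Real.sqrt (S (k+1) ω) :=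
        Real.mul_self_sqrt (by positivity)
      calc Real.sqrt (1 / Real.sqrt (S (k+1) ω)) *
          (‖G (k+1) ω‖ * Real.sqrt (1 / Real.sqrt (S (k+1) ω)))
          = ‖G (k+1) ω‖ * (Real.sqrt (1 / Real.sqrt (S (k+1) ω)) *
            Real.sqrt (1 / Real.sqrt (S (k+1) ω))) := by ring
        _ = ‖G (k+1) ω‖ * (1 / Real.sqrt (S (k+1) ω)) := by rw [this]
        _ = ‖G (k+1) ω‖ / Real.sqrt (S (k+1) ω) := by rw [mul_one_div]
    have e2 : ∀ k, (Real.sqrt (1 / Real.sqrt (S (k+1) ω)))^2 = 1 / Real.sqrt (S (k+1) ω) := by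
      intro k; exact Real.sq_sqrt (by positivity)
    have e3 : ∀ k, (‖G (k+1) ω‖ * Real.sqrt (1 / Real.sqrt (S (k+1) ω)))^2
        = ‖G (k+1) ω‖^2 / Real.sqrt (S (k+1) ω) := by
      intro k
      rw [mul_pow, e2 k]
      ring
    calc (∑ k ∈ Finset.range n, ‖G (k+1) ω‖ / Real.sqrt (S (k+1) ω))^2
        = (∑ k ∈ Finset.range n, Real.sqrt (1 / Real.sqrt (S (k+1) ω)) *
            (‖G (k+1) ω‖ * Real.sqrt (1 / Real.sqrt (S (k+1) ω))))^2 := by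
          congr 1; exact Finset.sum_congr rfl fun k _ => (e1 k).symm
      _ ≤ (∑ k ∈ Finset.range n, (Real.sqrt (1 / Real.sqrt (S (k+1) ω)))^2) *
          (∑ k ∈ Finset.range n, (‖G (k+1) ω‖ * Real.sqrt (1 / Real.sqrt (S (k+1) ω)))^2) := key
      _ = T n ω * ∑ k ∈ Finset.range n, ‖G (k+1) ω‖^2 / Real.sqrt (S (k+1) ω) := by
          rw [hT_def]
          congr 1
          · exact Finset.sum_congr rfl fun k _ => e2 k
          · exact Finset.sum_congr rfl fun k _ => e3 k
      _ ≤ T n ω * (2 * Real.sqrt (S n ω)) := by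
          apply mul_le_mul_of_nonneg_left (hL3 ω n) (hT_nonneg n ω)
  -- gradient bound along trajectory
  have hGrad : ∀ ω n, ‖gradient g (θ (n+1) ω)‖ ≤ ‖gradient g θ₁‖
      + L * α₀ * ∑ k ∈ Finset.range n, ‖G (k+1) ω‖ / Real.sqrt (S (k+1) ω) := by
    intro ω n
    induction n with
    | zero => simp [hθ_init ω]
    | succ n ih =>
      have hrec := hθ_rec (n+1) (by omega) ω
      have hdiff : ‖gradient g (θ (n+2) ω) - gradient g (θ (n+1) ω)‖
          ≤ L * (α₀ / Real.sqrt (S (n+1) ω) * ‖G (n+1) ω‖) := by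
        calc ‖gradient g (θ (n+2) ω) - gradient g (θ (n+1) ω)‖
            ≤ L * ‖θ (n+2) ω - θ (n+1) ω‖ := hg_smooth _ _
          _ = L * (α₀ / Real.sqrt (S (n+1) ω) * ‖G (n+1) ω‖) := by
              rw [hrec]
              rw [show θ (n+1) ω - (α₀ / Real.sqrt (S (n+1) ω)) • G (n+1) ω - θ (n+1) ω
                  = -((α₀ / Real.sqrt (S (n+1) ω)) • G (n+1) ω) by abel]
              rw [norm_neg, norm_smul, Real.norm_eq_abs,
                abs_of_nonneg (by positivity : (0:ℝ) ≤ α₀ / Real.sqrt (S (n+1) ω))]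
      have htri : ‖gradient g (θ (n+2) ω)‖ ≤ ‖gradient g (θ (n+1) ω)‖
          + ‖gradient g (θ (n+2) ω) - gradient g (θ (n+1) ω)‖ := by
        have := norm_add_le (gradient g (θ (n+1) ω))
          (gradient g (θ (n+2) ω) - gradient g (θ (n+1) ω))
        simpa using this
      rw [Finset.sum_range_succ]
      have : L * (α₀ / Real.sqrt (S (n+1) ω) * ‖G (n+1) ω‖)
          = L * α₀ * (‖G (n+1) ω‖ / Real.sqrt (S (n+1) ω)) := by ring
      calc ‖gradient g (θ (n+1+1) ω)‖
          ≤ ‖gradient g (θ (n+1) ω)‖ + L * (α₀ / Real.sqrt (S (n+1) ω) * ‖G (n+1) ω‖) := by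
            exact htri.trans (by linarith)
        _ ≤ ‖gradient g θ₁‖ + L * α₀ * ∑ k ∈ Finset.range n, ‖G (k+1) ω‖ / Real.sqrt (S (k+1) ω)
            + L * α₀ * (‖G (n+1) ω‖ / Real.sqrt (S (n+1) ω)) := by rw [this] at *; linarith
        _ = ‖gradient g θ₁‖ + L * α₀ * (∑ k ∈ Finset.range n, ‖G (k+1) ω‖ / Real.sqrt (S (k+1) ω)
            + ‖G (n+1) ω‖ / Real.sqrt (S (n+1) ω)) := by ring
  -- measurability of S and T
  have hSsm : ∀ n, StronglyMeasurable[ℱ n] (S n) := by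
    intro n
    induction n with
    | zero =>
      have h0 : S 0 = fun _ => S₀ := funext hS_init
      rw [h0]; exact stronglyMeasurable_const
    | succ n ih =>
      have h0 : S (n+1) = fun ω => S n ω + ‖G (n+1) ω‖^2 := funext (hS_succ n)
      rw [h0]
      have hnrm := (hG_meas (n+1) (by omega)).norm
      have hG2 : StronglyMeasurable[ℱ (n+1)] fun ω => ‖G (n+1) ω‖^2 := by
        simpa [pow_two, Pi.mul_def] using hnrm.mul hnrm
      exact (ih.mono (ℱ.mono (Nat.le_succ n))).add hG2
  have hSm : ∀ n, Measurable[ℱ n] (S n) := fun n => (hSsm n).measurable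
  have hTm : ∀ n, Measurable[ℱ n] (T n) := by
    intro n
    simp only [hT_def]
    apply Finset.measurable_sum
    intro k hk
    have hk' : k + 1 ≤ n := by have := Finset.mem_range.mp hk; omega
    exact measurable_const.div (((hSm (k+1)).mono (ℱ.mono hk') le_rfl).sqrt)
  have hTm0 : ∀ n, Measurable (T n) := fun n => (hTm n).mono (ℱ.le n) le_rfl
  -- integrability
  have hS_int : ∀ n, Integrable (S n) P := by
    intro n
    induction n with
    | zero =>
      have h0 : S 0 = fun _ => S₀ := funext hS_init
      rw [h0]; exact integrable_const _
    | succ n ih =>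
      have h0 : S (n+1) = fun ω => S n ω + ‖G (n+1) ω‖^2 := funext (hS_succ n)
      rw [h0]; exact ih.add (hG_sq_int (n+1) (by omega))
  have hsqS_meas : ∀ n, Measurable fun ω => Real.sqrt (S n ω) :=
    fun n => ((hSm n).mono (ℱ.le n) le_rfl).sqrt
  have hsqS_int : ∀ n, Integrable (fun ω => Real.sqrt (S n ω)) P := by
    intro n
    refine Integrable.mono' ((hS_int n).div_const (Real.sqrt S₀))
      (hsqS_meas n).aestronglyMeasurable ?_
    refine Filter.Eventually.of_forall fun ω => ?_
    rw [Real.norm_eq_abs, abs_of_nonneg (Real.sqrt_nonneg _),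
      le_div_iff₀ (Real.sqrt_pos.mpr hS₀)]
    have h1 : Real.sqrt (S n ω) * Real.sqrt (S n ω) = S n ω :=
      Real.mul_self_sqrt (hS_pos n ω).le
    nlinarith [Real.sqrt_le_sqrt (hS_lb n ω), Real.sqrt_nonneg (S n ω)]
  -- main claim : for each M, the event $\{∀ n, T_n ≤ M\}$ is null
  have key : ∀ M : ℕ, P {ω | ∀ n, T n ω ≤ (M:ℝ)} = 0 := by
    intro M
    by_contra hP0
    set C₁ : ℝ := 2 * ‖gradient g θ₁‖^2 with hC₁
    set C₂ : ℝ := 4 * (M:ℝ) * L^2 * α₀^2 with hC₂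
    have hC₁0 : 0 ≤ C₁ := by positivity
    have hC₂0 : 0 ≤ C₂ := by positivity
    have hsS₀ : 0 < Real.sqrt S₀ := Real.sqrt_pos.mpr hS₀
    set K : ℝ := σ₀ * C₂ / 2 + (σ₀ * C₁ + σ₁) / (2 * Real.sqrt S₀) with hK
    have hK0 : 0 ≤ K := by positivity
    set A : ℕ → Set Ω := fun n => {ω | T n ω ≤ (M:ℝ)} with hA
    have hA_measF : ∀ n, MeasurableSet[ℱ n] (A n) := fun n =>
      measurableSet_le (hTm n) measurable_const
    have hA_meas : ∀ n, MeasurableSet (A n) := fun n => ℱ.le n _ (hA_measF n)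
    have hA_anti : ∀ {m n : ℕ}, m ≤ n → A n ⊆ A m := by
      intro m n h ω hω
      exact le_trans (hT_mono ω h) hω
    -- gradient bound on A n
    have hGradA : ∀ ω n, ω ∈ A n →
        ‖gradient g (θ (n+1) ω)‖^2 ≤ C₁ + C₂ * Real.sqrt (S n ω) := by
      intro ω n hω
      have hTM : T n ω ≤ (M:ℝ) := hω
      obtain ⟨x, hx0, hxle, hx2⟩ : ∃ x : ℝ, 0 ≤ x ∧
          ‖gradient g (θ (n+1) ω)‖ ≤ ‖gradient g θ₁‖ + L * α₀ * x ∧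
          x^2 ≤ T n ω * (2 * Real.sqrt (S n ω)) :=
        ⟨_, Finset.sum_nonneg fun k _ => by positivity, hGrad ω n, hCS ω n⟩
      have hsq : 0 ≤ Real.sqrt (S n ω) := Real.sqrt_nonneg _
      have hG0 : 0 ≤ ‖gradient g (θ (n+1) ω)‖ := norm_nonneg _
      have h2 : ‖gradient g (θ (n+1) ω)‖^2 ≤ (‖gradient g θ₁‖ + L * α₀ * x)^2 := by
        have hb : 0 ≤ ‖gradient g θ₁‖ + L * α₀ * x := by positivity
        nlinarith
      have h3 : x^2 ≤ (M:ℝ) * (2 * Real.sqrt (S n ω)) := by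
        refine hx2.trans (mul_le_mul_of_nonneg_right hTM ?_)
        positivity
      have h4 : (L*α₀)^2 * x^2 ≤ (L*α₀)^2 * ((M:ℝ) * (2 * Real.sqrt (S n ω))) :=
        mul_le_mul_of_nonneg_left h3 (sq_nonneg _)
      rw [hC₁, hC₂]
      nlinarith [sq_nonneg (‖gradient g θ₁‖ - L * α₀ * x)]
    -- the truncated expected sqrt process
    set v : ℕ → ℝ := fun n => ∫ ω in A n, Real.sqrt (S n ω) ∂P with hv
    have hv0 : v 0 ≤ Real.sqrt S₀ := by
      have h1 : (P (A 0)).toReal ≤ 1 := by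
        simpa using ENNReal.toReal_mono ENNReal.one_ne_top prob_le_one
      simp only [hv, hS_init, setIntegral_const, smul_eq_mul]
      nlinarith [Real.sqrt_nonneg S₀, show P.real (A 0) = (P (A 0)).toReal from rfl]
    have hW_int : ∀ n, Integrable (fun ω => (2 * Real.sqrt (S n ω))⁻¹ * ‖G (n+1) ω‖^2) P := by
      intro n
      refine (hG_sq_int (n+1) (by omega)).bdd_mul
        ((measurable_const.mul (hsqS_meas n)).inv).aestronglyMeasurable
        (Filter.Eventually.of_forall (fun ω => ?_) : ∀ᵐ ω ∂P, ‖(2 * Real.sqrt (S n ω))⁻¹‖ ≤ (2*Real.sqrt S₀)⁻¹)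
      rw [Real.norm_eq_abs, abs_of_nonneg (by positivity)]
      apply inv_anti₀ (by positivity)
      have := Real.sqrt_le_sqrt (hS_lb n ω); linarith
    have hvrec : ∀ n, v (n+1) ≤ v n + K := by
      intro n
      have hsub : A (n+1) ⊆ A n := hA_anti (Nat.le_succ n)
      have step1 : v (n+1) ≤ ∫ ω in A n, Real.sqrt (S (n+1) ω) ∂P := by
        refine setIntegral_mono_set ((hsqS_int (n+1)).integrableOn)
          (Filter.Eventually.of_forall fun ω => Real.sqrt_nonneg _)
          (HasSubset.Subset.eventuallyLE hsub)
      have step2 : ∫ ω in A n, Real.sqrt (S (n+1) ω) ∂P ≤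
          ∫ ω in A n, (Real.sqrt (S n ω) + (2 * Real.sqrt (S n ω))⁻¹ * ‖G (n+1) ω‖^2) ∂P := by
        refine setIntegral_mono ((hsqS_int (n+1)).integrableOn)
          (((hsqS_int n).add (hW_int n)).integrableOn) fun ω => ?_
        rw [hS_succ n ω]
        have h1 := aux_sqrt_add_le (hS_pos n ω) (sq_nonneg ‖G (n+1) ω‖)
        have heq : ‖G (n+1) ω‖^2 / (2 * Real.sqrt (S n ω))
            = (2 * Real.sqrt (S n ω))⁻¹ * ‖G (n+1) ω‖^2 := by
          rw [div_eq_mul_inv, mul_comm]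
        rw [← heq]
        exact h1
      have step3 : ∫ ω in A n, (Real.sqrt (S n ω) + (2 * Real.sqrt (S n ω))⁻¹ * ‖G (n+1) ω‖^2) ∂P
          = v n + ∫ ω in A n, (2 * Real.sqrt (S n ω))⁻¹ * ‖G (n+1) ω‖^2 ∂P := by
        rw [hv]
        exact integral_add ((hsqS_int n).integrableOn) ((hW_int n).integrableOn)
      have step4 : ∫ ω in A n, (2 * Real.sqrt (S n ω))⁻¹ * ‖G (n+1) ω‖^2 ∂P ≤ K := by
        set gsq : Ω → ℝ := fun ω => ‖G (n+1) ω‖^2 with hgsq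
        set f : Ω → ℝ := (A n).indicator (fun ω => (2 * Real.sqrt (S n ω))⁻¹) with hf
        have hgsq_int : Integrable gsq P := hG_sq_int (n+1) (by omega)
        have hf_sm : StronglyMeasurable[ℱ n] f :=
          StronglyMeasurable.indicator
            ((measurable_const.mul (hSm n).sqrt).inv).stronglyMeasurable (hA_measF n)
        have hf_bdd : ∀ ω, ‖f ω‖ ≤ (2 * Real.sqrt S₀)⁻¹ := by
          intro ω
          rw [hf]
          by_cases hω : ω ∈ A n
          · rw [Set.indicator_of_mem hω, Real.norm_eq_abs, abs_of_nonneg (by positivity)]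
            apply inv_anti₀ (by positivity)
            have := Real.sqrt_le_sqrt (hS_lb n ω); linarith
          · rw [Set.indicator_of_notMem hω, norm_zero]; positivity
        have heq1 : ∫ ω in A n, (2 * Real.sqrt (S n ω))⁻¹ * ‖G (n+1) ω‖^2 ∂P
            = ∫ ω, (f * gsq) ω ∂P := by
          rw [← integral_indicator (hA_meas n)]
          congr 1
          funext ω
          rw [hf, hgsq, Pi.mul_apply]
          by_cases hω : ω ∈ A n
          · rw [Set.indicator_of_mem hω, Set.indicator_of_mem hω]
          · rw [Set.indicator_of_notMem hω, Set.indicator_of_notMem hω, zero_mul]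
        have hfG_int : Integrable (f * gsq) P := by
          have := hgsq_int.bdd_mul ((hf_sm.mono (ℱ.le n)).aestronglyMeasurable)
            (Filter.Eventually.of_forall hf_bdd)
          exact this
        have hmul : P[f * gsq | ℱ n] =ᵐ[P] f * P[gsq | ℱ n] :=
          condExp_mul_of_stronglyMeasurable_left hf_sm hfG_int hgsq_int
        have hvar := hG_var (n+1) (by omega)
        simp only [Nat.add_sub_cancel] at hvar
        have hbound : ∀ᵐ ω ∂P, (f * P[gsq | ℱ n]) ω ≤ K := by
          filter_upwards [hvar] with ω hω
          rw [Pi.mul_apply]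
          by_cases hmem : ω ∈ A n
          · have hfω : f ω = (2 * Real.sqrt (S n ω))⁻¹ := by
              rw [hf, Set.indicator_of_mem hmem]
            have h1 : (P[gsq | ℱ n]) ω ≤ σ₀ * (C₁ + C₂ * Real.sqrt (S n ω)) + σ₁ := by
              refine hω.trans ?_
              have := hGradA ω n hmem
              nlinarith
            have h2 : f ω * (P[gsq | ℱ n]) ω
                ≤ (2 * Real.sqrt (S n ω))⁻¹ * (σ₀ * (C₁ + C₂ * Real.sqrt (S n ω)) + σ₁) := by
              rw [hfω]
              exact mul_le_mul_of_nonneg_left h1 (by positivity)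
            refine h2.trans ?_
            have hs := hsqS_pos n ω
            have hs0 : Real.sqrt S₀ ≤ Real.sqrt (S n ω) := Real.sqrt_le_sqrt (hS_lb n ω)
            have e : (2 * Real.sqrt (S n ω))⁻¹ * (σ₀ * (C₁ + C₂ * Real.sqrt (S n ω)) + σ₁)
                = σ₀ * C₂ / 2 + (σ₀ * C₁ + σ₁) / (2 * Real.sqrt (S n ω)) := by
              field_simp
              ring
            rw [e, hK]
            have hdiv : (σ₀ * C₁ + σ₁) / (2 * Real.sqrt (S n ω))
                ≤ (σ₀ * C₁ + σ₁) / (2 * Real.sqrt S₀) := by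
              gcongr
            linarith
          · have hfω : f ω = 0 := by rw [hf, Set.indicator_of_notMem hmem]
            rw [hfω, zero_mul]; exact hK0
        have hint1 : Integrable (f * P[gsq | ℱ n]) P := by
          have := integrable_condExp.bdd_mul (μ := P) (f := f) (g := P[gsq | ℱ n])
            ((hf_sm.mono (ℱ.le n)).aestronglyMeasurable) (Filter.Eventually.of_forall hf_bdd)
          exact this
        calc ∫ ω in A n, (2 * Real.sqrt (S n ω))⁻¹ * ‖G (n+1) ω‖^2 ∂P
            = ∫ ω, (f * gsq) ω ∂P := heq1
          _ = ∫ ω, (P[f * gsq | ℱ n]) ω ∂P := (integral_condExp (ℱ.le n)).symm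
          _ = ∫ ω, (f * P[gsq | ℱ n]) ω ∂P := integral_congr_ae hmul
          _ ≤ ∫ _ω, K ∂P := integral_mono_ae hint1 (integrable_const K) hbound
          _ = K := by simp
      calc v (n+1) ≤ ∫ ω in A n, Real.sqrt (S (n+1) ω) ∂P := step1
        _ ≤ _ := step2
        _ = v n + ∫ ω in A n, (2 * Real.sqrt (S n ω))⁻¹ * ‖G (n+1) ω‖^2 ∂P := step3
        _ ≤ v n + K := by linarith
    have hv_le : ∀ n, v n ≤ Real.sqrt S₀ + K * n := by
      intro n
      induction n with
      | zero => simpa using hv0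
      | succ n ih =>
        have := hvrec n
        push_cast
        push_cast at ih
        linarith
    -- Borel–Cantelli-free contradiction
    set Bset : Set Ω := ⋂ n, A n with hB
    have hBsub : ∀ n, Bset ⊆ A n := fun n => Set.iInter_subset A n
    have hBeq : {ω | ∀ n, T n ω ≤ (M:ℝ)} = Bset := by
      ext ω
      simp only [hB, hA, Set.mem_iInter, Set.mem_setOf_eq]
    rw [hBeq] at hP0
    have hp : 0 < (P Bset).toReal := ENNReal.toReal_pos hP0 (measure_ne_top P _)
    set p := (P Bset).toReal with hp_def
    set ε : ℝ := p / (4 * (K + 1)) with hε_def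
    have hε : 0 < ε := by rw [hε_def]; positivity
    set Cs : ℕ → Set Ω := fun N => Bset ∩ {ω | ∀ n, T n ω ≤ T N ω + ε} with hCs
    have hCs_mono : Monotone Cs := by
      intro N N' h ω hω
      exact ⟨hω.1, fun n => (hω.2 n).trans (by linarith [hT_mono ω h])⟩
    have hCs_subB : ∀ N, Cs N ⊆ Bset := fun N => Set.inter_subset_left
    have hCs_union : ⋃ N, Cs N = Bset := by
      apply Set.Subset.antisymm (Set.iUnion_subset hCs_subB)
      intro ω hω
      have hTM : ∀ n, T n ω ≤ (M:ℝ) := fun n => Set.mem_iInter.mp hω n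
      have hbdd : BddAbove (Set.range fun n => T n ω) := by
        refine ⟨(M:ℝ), ?_⟩
        rintro x ⟨n, rfl⟩
        exact hTM n
      set l := ⨆ n, T n ω with hl
      have hle : ∀ n, T n ω ≤ l := fun n => le_ciSup hbdd n
      by_contra hns
      simp only [Set.mem_iUnion] at hns
      push_neg at hns
      have hex : ∀ N, ∃ n, T N ω + ε < T n ω := by
        intro N
        by_contra hcon
        push_neg at hcon
        exact hns N ⟨hω, fun n => hcon n⟩
      have : l ≤ l - ε := by
        apply ciSup_le
        intro N
        obtain ⟨n, hn⟩ := hex N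
        have := hle n
        linarith
      linarith
    have hCs_meas : ∀ N, MeasurableSet (Cs N) := by
      intro N
      refine (MeasurableSet.iInter fun n => hA_meas n).inter ?_
      have : {ω | ∀ n, T n ω ≤ T N ω + ε} = ⋂ n, {ω | T n ω ≤ T N ω + ε} := by
        ext ω; simp [Set.mem_iInter]
      rw [this]
      exact MeasurableSet.iInter fun n =>
        measurableSet_le (hTm0 n) ((hTm0 N).add measurable_const)
    have hPC : Tendsto (fun N => P (Cs N)) atTop (𝓝 (P Bset)) := by
      have h := tendsto_measure_iUnion_atTop (μ := P) hCs_mono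
      rwa [hCs_union] at h
    have hPCr : Tendsto (fun N => (P (Cs N)).toReal) atTop (𝓝 p) :=
      (ENNReal.tendsto_toReal (measure_ne_top P _)).comp hPC
    obtain ⟨N, hN⟩ := (hPCr.eventually (eventually_gt_nhds (by linarith : p/2 < p))).exists
    have hlow : ∀ ω ∈ Cs N, ∀ n, N ≤ n → ((n:ℝ) - N) / ε ≤ Real.sqrt (S n ω) := by
      intro ω hω n hn
      have h1 : ∀ k ∈ Finset.Ico N n, 1 / Real.sqrt (S n ω) ≤ 1 / Real.sqrt (S (k+1) ω) := by
        intro k hk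
        have hk2 := (Finset.mem_Ico.mp hk).2
        exact one_div_le_one_div_of_le (hsqS_pos (k+1) ω)
          (Real.sqrt_le_sqrt (hS_mono ω (show k+1 ≤ n by omega)))
      have h2 : (Finset.Ico N n).card • (1 / Real.sqrt (S n ω))
          ≤ ∑ k ∈ Finset.Ico N n, 1 / Real.sqrt (S (k+1) ω) :=
        Finset.card_nsmul_le_sum _ _ _ h1
      rw [Nat.card_Ico, nsmul_eq_mul] at h2
      have h3 : ∑ k ∈ Finset.Ico N n, 1 / Real.sqrt (S (k+1) ω) = T n ω - T N ω := by
        simp only [hT_def]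
        rw [Finset.sum_Ico_eq_sub _ hn]
      have h4 : T n ω - T N ω ≤ ε := by
        have := hω.2 n
        linarith
      have h5 : ((n:ℝ) - N) * (1 / Real.sqrt (S n ω)) ≤ ε := by
        rw [← Nat.cast_sub hn]
        rw [h3] at h2
        linarith
      have hs := hsqS_pos n ω
      have hinv : (1 / Real.sqrt (S n ω)) * Real.sqrt (S n ω) = 1 :=
        one_div_mul_cancel hs.ne'
      have h6 : (n:ℝ) - N ≤ ε * Real.sqrt (S n ω) := by
        nlinarith [mul_le_mul_of_nonneg_right h5 hs.le]
      rw [div_le_iff₀ hε]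
      linarith
    obtain ⟨n, hn⟩ := exists_nat_gt (Real.sqrt S₀ + 2*(K+1)*(N:ℝ) + 1)
    have hNn : N ≤ n := by
      have h0 : (0:ℝ) ≤ Real.sqrt S₀ := Real.sqrt_nonneg _
      have h1 : (N:ℝ) ≤ 2*(K+1)*(N:ℝ) := by nlinarith [Nat.cast_nonneg (α := ℝ) N]
      have : (N:ℝ) < n := by linarith
      exact_mod_cast this.le
    have hlb : ((n:ℝ) - N) / ε * (P (Cs N)).toReal ≤ ∫ ω in Cs N, Real.sqrt (S n ω) ∂P :=
      by have := setIntegral_ge_of_const_le (hCs_meas N) (measure_ne_top P _)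
           (fun ω hω => hlow ω hω n hNn) ((hsqS_int n).integrableOn)
         rw [smul_eq_mul, mul_comm] at this; exact this
    have hub : ∫ ω in Cs N, Real.sqrt (S n ω) ∂P ≤ v n :=
      setIntegral_mono_set ((hsqS_int n).integrableOn)
        (Filter.Eventually.of_forall fun ω => Real.sqrt_nonneg _)
        (HasSubset.Subset.eventuallyLE ((hCs_subB N).trans (hBsub n)))
    have hvn := hv_le n
    have hnn : (0:ℝ) ≤ (n:ℝ) - N := sub_nonneg.mpr (by exact_mod_cast hNn)
    have h7 : ((n:ℝ) - N)/ε * (p/2) ≤ ((n:ℝ) - N)/ε * (P (Cs N)).toReal :=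
      mul_le_mul_of_nonneg_left hN.le (by positivity)
    have h8 : ((n:ℝ) - N)/ε * (p/2) = 2*(K+1)*((n:ℝ) - N) := by
      rw [hε_def]
      field_simp
      ring
    have hstep : 2*(K+1)*((n:ℝ) - N) ≤ Real.sqrt S₀ + K*n := by
      rw [h8] at h7
      exact h7.trans (hlb.trans (hub.trans hvn))
    nlinarith [mul_nonneg hK0 (Nat.cast_nonneg (α := ℝ) n),
      mul_nonneg hK0 (Nat.cast_nonneg (α := ℝ) N), hstep, hn, hK0,
      Nat.cast_nonneg (α := ℝ) n, Nat.cast_nonneg (α := ℝ) N]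
  -- conclude
  have hae : ∀ᵐ ω ∂P, ∀ M : ℕ, ∃ n, (M:ℝ) < T n ω := by
    have hnull : P (⋃ M : ℕ, {ω | ∀ n, T n ω ≤ (M:ℝ)}) = 0 :=
      measure_iUnion_null fun M => key M
    rw [ae_iff]
    refine measure_mono_null ?_ hnull
    intro ω hω
    simp only [Set.mem_setOf_eq] at hω
    push_neg at hω
    obtain ⟨M, hM⟩ := hω
    exact Set.mem_iUnion.mpr ⟨M, hM⟩
  filter_upwards [hae] with ω hω
  have hTt : Tendsto (fun n => T n ω) atTop atTop := by
    apply tendsto_atTop_atTop_of_monotone (hT_mono ω)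
    intro b
    obtain ⟨M, hM⟩ := exists_nat_ge b
    obtain ⟨n, hn⟩ := hω M
    exact ⟨n, le_trans hM hn.le⟩
  have heq : (fun N : ℕ => ∑ n ∈ Finset.range N, α₀ / Real.sqrt (S (n + 1) ω))
      = fun N => α₀ * T N ω := by
    funext N
    simp only [hT_def]
    rw [Finset.mul_sum]
    exact Finset.sum_congr rfl fun k _ => by rw [mul_one_div]
  rw [heq]
  exact hTt.const_mul_atTop hα₀
end

section
/- Polynomial growth bound for RMSProp gradient accumulation: there exists a nonnegative random variable ω with E[ω] < +∞ (and in particular ω < +∞ almost surely) such that almost surely, for every T ≥ 1, √(S_T) ≤ (T+1)⁴·ω, where S_T := v·d + ∑_{n=1}^T ‖G_n‖². -/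
open MeasureTheory Filter

-- auxiliary: coordinate bounds in EuclideanSpace
lemma euc_normsq_eq {d : ℕ} (y : EuclideanSpace ℝ (Fin d)) :
    ‖y‖ ^ 2 = ∑ i, y i ^ 2 := by
  rw [EuclideanSpace.norm_eq, Real.sq_sqrt (by positivity)]
  simp [Real.norm_eq_abs, sq_abs]

lemma euc_coord_sq_le {d : ℕ} (y : EuclideanSpace ℝ (Fin d)) (i : Fin d) :
    y i ^ 2 ≤ ‖y‖ ^ 2 := by
  rw [euc_normsq_eq]
  exact Finset.single_le_sum (f := fun j => y j ^ 2) (fun j _ => sq_nonneg _)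
    (Finset.mem_univ i)

set_option maxHeartbeats 1000000 in
/-- Polynomial growth bound for RMSProp gradient accumulation (Lemma C.3):
there is a nonnegative integrable random variable `W` such that a.s. for every
`T ≥ 1`, `√(S_T) ≤ (T+1)⁴·W`, where `S_T = v·d + ∑_{n=1}^T ‖G_n‖²`. -/
theorem rmsprop_polynomial_growth
    {d : ℕ} {Ω : Type*} {m0 : MeasurableSpace Ω} (P : Measure Ω) [IsProbabilityMeasure P]
    (ℱ : Filtration ℕ m0)
    (g : EuclideanSpace ℝ (Fin d) → ℝ)
    (L σ₀ σ₁ v ε β₁ : ℝ)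
    (hL : 0 < L) (hσ₀ : 0 ≤ σ₀) (hσ₁ : 0 ≤ σ₁) (hv : 0 < v) (hε : 0 < ε)
    (hβ₁ : β₁ ∈ Set.Ioo (0 : ℝ) 1)
    (hg_diff : ContDiff ℝ 1 g)
    (hg_nonneg : ∀ x, 0 ≤ g x)
    (hg_smooth : ∀ x y, ‖gradient g x - gradient g y‖ ≤ L * ‖x - y‖)
    (θ₁ : EuclideanSpace ℝ (Fin d))
    (G θ : ℕ → Ω → EuclideanSpace ℝ (Fin d))
    (V : ℕ → Ω → Fin d → ℝ)
    (hG_meas : ∀ n, 1 ≤ n → StronglyMeasurable[ℱ n] (G n))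
    (hG_int : ∀ n, 1 ≤ n → Integrable (G n) P)
    (hG_sq_int : ∀ n, 1 ≤ n → Integrable (fun ω => ‖G n ω‖ ^ 2) P)
    (hθ_adapted : ∀ n, 1 ≤ n → StronglyMeasurable[ℱ (n - 1)] (θ n))
    (hθ_init : ∀ ω, θ 1 ω = θ₁)
    (hV0 : ∀ ω i, V 0 ω i = v)
    (hV1 : ∀ ω i, V 1 ω i = β₁ * v + (1 - β₁) * G 1 ω i ^ 2)
    (hV_rec : ∀ n : ℕ, 2 ≤ n → ∀ ω i,
      V n ω i = (1 - 1 / (n : ℝ)) * V (n - 1) ω i + (1 / (n : ℝ)) * G n ω i ^ 2)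
    (hθ_rec : ∀ n : ℕ, 1 ≤ n → ∀ ω (i : Fin d),
      θ (n + 1) ω i = θ n ω i
        - (1 / Real.sqrt (n : ℝ)) / (Real.sqrt (V n ω i) + ε) * G n ω i)
    (hG_unbiased : ∀ n, 1 ≤ n →
      P[G n | ℱ (n - 1)] =ᵐ[P] fun ω => gradient g (θ n ω))
    (hG_var : ∀ n, 1 ≤ n → ∀ i : Fin d, ∀ᵐ ω ∂P,
      (P[fun ω => G n ω i ^ 2 | ℱ (n - 1)]) ω
        ≤ σ₀ * gradient g (θ n ω) i ^ 2 + σ₁) :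
    ∃ W : Ω → ℝ,
      (∀ ω, 0 ≤ W ω) ∧ Integrable W P ∧
      ∀ᵐ ω ∂P, ∀ T : ℕ, 1 ≤ T →
        Real.sqrt (v * d + ∑ n ∈ Finset.Icc 1 T, ‖G n ω‖ ^ 2)
          ≤ ((T : ℝ) + 1) ^ 4 * W ω := by

  classical
  -- step-size constant
  set c : ℝ := 1 / Real.sqrt (1 - β₁) with hc_def
  have hβlt : β₁ < 1 := hβ₁.2
  have hβpos : 0 < β₁ := hβ₁.1
  have h1β : 0 < 1 - β₁ := by linarith
  have hsβ : 0 < Real.sqrt (1 - β₁) := Real.sqrt_pos.mpr h1β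
  have hsβ1 : Real.sqrt (1 - β₁) ≤ 1 := by
    have := Real.sqrt_le_sqrt (show 1 - β₁ ≤ 1 by linarith)
    simpa using this
  have hc0 : 0 < c := by positivity
  have hc1 : 1 ≤ c := by
    rw [hc_def, le_div_iff₀ hsβ]; simpa using hsβ1
  have hcs : c * Real.sqrt (1 - β₁) = 1 := by
    rw [hc_def]; field_simp
  -- V is nonnegative
  have hVnonneg : ∀ n ω i, 0 ≤ V n ω i := by
    intro n
    induction n with
    | zero => intro ω i; rw [hV0]; exact hv.le
    | succ n ih =>
      intro ω i
      match n, ih with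
      | 0, _ =>
        rw [hV1]
        nlinarith [sq_nonneg (G 1 ω i), hv.le]
      | (m+1), ih =>
        rw [hV_rec (m+2) (by omega)]
        have hred : (m+2) - 1 = m+1 := rfl
        rw [hred]
        have hpos : (0:ℝ) < ((m+2:ℕ):ℝ) := by positivity
        have h1 : 1 / ((m+2:ℕ):ℝ) ≤ 1 := by
          rw [div_le_one hpos]; push_cast; linarith
        have h0 : (0:ℝ) ≤ 1 / ((m+2:ℕ):ℝ) := by positivity
        nlinarith [sq_nonneg (G (m+2) ω i), ih ω i]
  -- per-coordinate step bound
  have hstep : ∀ n, 1 ≤ n → ∀ ω i, |θ (n+1) ω i - θ n ω i| ≤ c := by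
    intro n hn ω i
    have hd : 0 < Real.sqrt (V n ω i) + ε :=
      add_pos_of_nonneg_of_pos (Real.sqrt_nonneg _) hε
    have habs : |θ (n+1) ω i - θ n ω i|
        = (1 / Real.sqrt (n:ℝ)) / (Real.sqrt (V n ω i) + ε) * |G n ω i| := by
      rw [hθ_rec n hn ω i]
      have hs : (0:ℝ) ≤ (1 / Real.sqrt (n:ℝ)) / (Real.sqrt (V n ω i) + ε) := by
        positivity
      rw [sub_sub_cancel_left, abs_neg, abs_mul, abs_of_nonneg hs]
    rw [habs]
    rcases eq_or_lt_of_le hn with h1 | h2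
    · -- n = 1
      subst h1
      have hV1' : Real.sqrt (1 - β₁) * |G 1 ω i| ≤ Real.sqrt (V 1 ω i) := by
        rw [hV1]
        have he : Real.sqrt (1 - β₁) * |G 1 ω i|
            = Real.sqrt ((1-β₁) * G 1 ω i ^ 2) := by
          rw [Real.sqrt_mul h1β.le, Real.sqrt_sq_eq_abs]
        rw [he]
        exact Real.sqrt_le_sqrt (by nlinarith [hv.le, sq_nonneg (G 1 ω i)])
      simp only [Nat.cast_one, Real.sqrt_one]
      rw [div_div, one_div_mul_eq_div, div_le_iff₀ (by simpa using hd)]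
      nlinarith [mul_le_mul_of_nonneg_left hV1' hc0.le, abs_nonneg (G 1 ω i),
        mul_pos hc0 hε]
    · -- n ≥ 2
      have hn2 : 2 ≤ n := h2
      have hnpos : (0:ℝ) < (n:ℝ) := by exact_mod_cast Nat.lt_of_lt_of_le Nat.zero_lt_one hn
      have hVlow : G n ω i ^ 2 / (n:ℝ) ≤ V n ω i := by
        rw [hV_rec n hn2 ω i]
        have h1 : 1 / (n:ℝ) ≤ 1 := by
          rw [div_le_one hnpos]; exact_mod_cast hn
        have he : G n ω i ^ 2 / (n:ℝ) = 1 / (n:ℝ) * G n ω i ^ 2 := by ring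
        rw [he]
        nlinarith [mul_nonneg (by linarith : (0:ℝ) ≤ 1 - 1/(n:ℝ)) (hVnonneg (n-1) ω i)]
      have hsn : 0 < Real.sqrt (n:ℝ) := Real.sqrt_pos.mpr hnpos
      have hVs : |G n ω i| / Real.sqrt (n:ℝ) ≤ Real.sqrt (V n ω i) := by
        have he : |G n ω i| / Real.sqrt (n:ℝ)
            = Real.sqrt (G n ω i ^ 2 / (n:ℝ)) := by
          rw [Real.sqrt_div (sq_nonneg _), Real.sqrt_sq_eq_abs]
        rw [he]
        exact Real.sqrt_le_sqrt hVlow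
      have key : |G n ω i| ≤ Real.sqrt (n:ℝ) * (Real.sqrt (V n ω i) + ε) := by
        have := (div_le_iff₀ hsn).mp hVs
        nlinarith [hε.le, hsn.le]
      calc (1 / Real.sqrt (n:ℝ)) / (Real.sqrt (V n ω i) + ε) * |G n ω i|
          = |G n ω i| / (Real.sqrt (n:ℝ) * (Real.sqrt (V n ω i) + ε)) := by
            rw [div_div, one_div_mul_eq_div]
        _ ≤ 1 := by
            rw [div_le_one (by positivity)]; simpa using key
        _ ≤ c := hc1
  have hsd : (0:ℝ) ≤ Real.sqrt d := Real.sqrt_nonneg _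
  -- step norm bound
  have hstepnorm : ∀ n, 1 ≤ n → ∀ ω, ‖θ (n+1) ω - θ n ω‖ ≤ c * Real.sqrt d := by
    intro n hn ω
    have h1 : ‖θ (n+1) ω - θ n ω‖ ^ 2 ≤ (d:ℝ) * c ^ 2 := by
      rw [euc_normsq_eq]
      calc ∑ i, (θ (n+1) ω - θ n ω) i ^ 2 ≤ ∑ _i : Fin d, c ^ 2 := by
            apply Finset.sum_le_sum
            intro i _
            have : (θ (n+1) ω - θ n ω) i = θ (n+1) ω i - θ n ω i := rfl
            rw [this, ← sq_abs]
            exact pow_le_pow_left₀ (abs_nonneg _) (hstep n hn ω i) 2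
        _ = (d:ℝ) * c ^ 2 := by simp [mul_comm]
    have h2 := Real.sqrt_le_sqrt h1
    rwa [Real.sqrt_sq (norm_nonneg _), Real.sqrt_mul (Nat.cast_nonneg d),
      Real.sqrt_sq hc0.le, mul_comm] at h2
  -- distance from θ₁ grows at most linearly
  have hθdist : ∀ n, 1 ≤ n → ∀ ω, ‖θ n ω - θ₁‖ ≤ c * Real.sqrt d * n := by
    intro n hn
    induction n, hn using Nat.le_induction with
    | base => intro ω; simp [hθ_init ω]; positivity
    | succ n hn ih =>
      intro ω
      calc ‖θ (n+1) ω - θ₁‖ ≤ ‖θ (n+1) ω - θ n ω‖ + ‖θ n ω - θ₁‖ := by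
            have := norm_sub_le_norm_sub_add_norm_sub (θ (n+1) ω) (θ n ω) θ₁
            simpa using this
        _ ≤ c * Real.sqrt d + c * Real.sqrt d * n := add_le_add (hstepnorm n hn ω) (ih ω)
        _ ≤ c * Real.sqrt d * (n+1 : ℕ) := by push_cast; nlinarith [mul_nonneg hc0.le hsd]
  -- gradient bound
  set K : ℝ := ‖gradient g θ₁‖ + L * (c * Real.sqrt d) with hK_def
  have hK0 : 0 ≤ K := by positivity
  have hgrad : ∀ n, 1 ≤ n → ∀ ω, ‖gradient g (θ n ω)‖ ≤ K * n := by
    intro n hn ω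
    have h1 : ‖gradient g (θ n ω)‖ ≤ ‖gradient g θ₁‖ + L * ‖θ n ω - θ₁‖ := by
      have h2 := hg_smooth (θ n ω) θ₁
      have h3 := norm_sub_norm_le (gradient g (θ n ω)) (gradient g θ₁)
      linarith
    have h4 : L * ‖θ n ω - θ₁‖ ≤ L * (c * Real.sqrt d * n) :=
      mul_le_mul_of_nonneg_left (hθdist n hn ω) hL.le
    have hn' : (1:ℝ) ≤ (n:ℝ) := by exact_mod_cast hn
    rw [hK_def]
    nlinarith [norm_nonneg (gradient g θ₁)]
  -- measurability of coordinates of G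
  have hGmeas' : ∀ n, 1 ≤ n → Measurable (G n) := fun n hn =>
    ((hG_meas n hn).mono (ℱ.le n)).measurable
  have hGcoord_meas : ∀ n, 1 ≤ n → ∀ i : Fin d, Measurable (fun ω => G n ω i) :=
    fun n hn i => ((EuclideanSpace.proj i : EuclideanSpace ℝ (Fin d) →L[ℝ] ℝ)
      |>.continuous.measurable).comp (hGmeas' n hn)
  have hGcoord_int : ∀ n, 1 ≤ n → ∀ i : Fin d,
      Integrable (fun ω => G n ω i ^ 2) P := by
    intro n hn i
    refine (hG_sq_int n hn).mono ((hGcoord_meas n hn i).pow_const 2).aestronglyMeasurable ?_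
    filter_upwards with ω
    rw [Real.norm_eq_abs, Real.norm_eq_abs, abs_of_nonneg (sq_nonneg _),
      abs_of_nonneg (sq_nonneg (‖G n ω‖))]
    exact euc_coord_sq_le (G n ω) i
  -- expectation bound
  set C : ℝ := (d:ℝ) * (σ₀ * K ^ 2 + σ₁) with hC_def
  have hC0 : 0 ≤ C := by positivity
  have hEG : ∀ n, 1 ≤ n → ∫ ω, ‖G n ω‖ ^ 2 ∂P ≤ C * n ^ 2 := by
    intro n hn
    have hcoord : ∀ i : Fin d, ∫ ω, G n ω i ^ 2 ∂P ≤ σ₀ * (K * n) ^ 2 + σ₁ := by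
      intro i
      rw [← integral_condExp (ℱ.le (n-1)) (f := fun ω => G n ω i ^ 2) (μ := P)]
      have hbound : ∀ᵐ ω ∂P, (P[fun ω => G n ω i ^ 2 | ℱ (n-1)]) ω
          ≤ σ₀ * (K * n) ^ 2 + σ₁ := by
        filter_upwards [hG_var n hn i] with ω hω
        have h1 : gradient g (θ n ω) i ^ 2 ≤ ‖gradient g (θ n ω)‖ ^ 2 :=
          euc_coord_sq_le _ i
        have h2 : ‖gradient g (θ n ω)‖ ^ 2 ≤ (K * n) ^ 2 := by
          have := hgrad n hn ω
          nlinarith [norm_nonneg (gradient g (θ n ω))]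
        nlinarith
      calc ∫ ω, (P[fun ω => G n ω i ^ 2 | ℱ (n-1)]) ω ∂P
          ≤ ∫ _ω, (σ₀ * (K * n) ^ 2 + σ₁) ∂P :=
            integral_mono_ae integrable_condExp (integrable_const _) hbound
        _ = σ₀ * (K * n) ^ 2 + σ₁ := by simp
    have hsum : ∫ ω, ‖G n ω‖ ^ 2 ∂P = ∑ i, ∫ ω, G n ω i ^ 2 ∂P := by
      rw [← integral_finset_sum _ (fun i _ => hGcoord_int n hn i)]
      congr 1
      ext ω
      exact euc_normsq_eq (G n ω)
    rw [hsum]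
    calc ∑ i, ∫ ω, G n ω i ^ 2 ∂P ≤ ∑ _i : Fin d, (σ₀ * (K * n) ^ 2 + σ₁) :=
          Finset.sum_le_sum (fun i _ => hcoord i)
      _ = (d:ℝ) * (σ₀ * (K * n) ^ 2 + σ₁) := by
          rw [Finset.sum_const, Finset.card_univ, Fintype.card_fin, nsmul_eq_mul]
      _ ≤ C * n ^ 2 := by
          rw [hC_def]
          have hn' : (1:ℝ) ≤ (n:ℝ) := by exact_mod_cast hn
          nlinarith [mul_nonneg (mul_nonneg (Nat.cast_nonneg (α := ℝ) d) hσ₁)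
            (by nlinarith : (0:ℝ) ≤ (n:ℝ)^2 - 1),
            mul_nonneg (mul_nonneg (Nat.cast_nonneg (α := ℝ) d) hσ₀) (sq_nonneg (K * n))]
  -- the random series
  set F : Ω → ENNReal := fun ω => ∑' k : ℕ,
    ENNReal.ofReal (‖G (k+1) ω‖ ^ 2 / ((k:ℝ)+2) ^ 5) with hF_def
  have hterm_meas : ∀ k : ℕ, Measurable
      (fun ω => ENNReal.ofReal (‖G (k+1) ω‖ ^ 2 / ((k:ℝ)+2) ^ 5)) := by
    intro k
    exact ((((hGmeas' (k+1) (by omega)).norm.pow_const 2).div_const _)).ennreal_ofReal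
  have hF_meas : Measurable F := Measurable.ennreal_tsum hterm_meas
  have hterm_int : ∀ k : ℕ, Integrable
      (fun ω => ‖G (k+1) ω‖ ^ 2 / ((k:ℝ)+2) ^ 5) P := fun k =>
    (hG_sq_int (k+1) (by omega)).div_const _
  -- summable majorant
  have hb_sum : Summable (fun k : ℕ => C * (((k:ℝ)+1) ^ 2 / ((k:ℝ)+2) ^ 5)) := by
    apply Summable.mul_left
    have h3 : Summable (fun k : ℕ => 1 / ((k:ℝ)+1) ^ 3) := by
      have := (Real.summable_one_div_nat_pow (p := 3)).mpr (by norm_num)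
      have h := (summable_nat_add_iff 1).mpr this
      simpa [add_comm] using h
    apply Summable.of_nonneg_of_le (fun k => by positivity) _ h3
    intro k
    rw [div_le_div_iff₀ (by positivity) (by positivity)]
    have hk1 : (0:ℝ) ≤ (k:ℝ)+1 := by positivity
    nlinarith [pow_le_pow_left₀ hk1 (show (k:ℝ)+1 ≤ (k:ℝ)+2 by linarith) 5]
  -- finite total mass
  have hFlint : ∫⁻ ω, F ω ∂P ≠ ⊤ := by
    rw [hF_def]
    have h1 : ∫⁻ ω, (∑' k : ℕ,
        ENNReal.ofReal (‖G (k+1) ω‖ ^ 2 / ((k:ℝ)+2) ^ 5)) ∂P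
        = ∑' k : ℕ, ∫⁻ ω, ENNReal.ofReal (‖G (k+1) ω‖ ^ 2 / ((k:ℝ)+2) ^ 5) ∂P :=
      lintegral_tsum (fun k => (hterm_meas k).aemeasurable)
    rw [h1]
    have h2 : ∀ k : ℕ, ∫⁻ ω, ENNReal.ofReal (‖G (k+1) ω‖ ^ 2 / ((k:ℝ)+2) ^ 5) ∂P
        ≤ ENNReal.ofReal (C * (((k:ℝ)+1) ^ 2 / ((k:ℝ)+2) ^ 5)) := by
      intro k
      rw [← ofReal_integral_eq_lintegral_ofReal (hterm_int k)
        (Filter.Eventually.of_forall (fun ω => by positivity))]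
      apply ENNReal.ofReal_le_ofReal
      rw [integral_div]
      have h := hEG (k+1) (by omega)
      push_cast at h
      have he : C * (((k:ℝ)+1) ^ 2 / ((k:ℝ)+2) ^ 5)
          = (C * ((k:ℝ)+1) ^ 2) / ((k:ℝ)+2) ^ 5 := by ring
      rw [he]
      gcongr
    have hcalc : ∑' k : ℕ, ∫⁻ ω, ENNReal.ofReal (‖G (k+1) ω‖ ^ 2 / ((k:ℝ)+2) ^ 5) ∂P
        < ⊤ :=
      calc ∑' k : ℕ, ∫⁻ ω, ENNReal.ofReal (‖G (k+1) ω‖ ^ 2 / ((k:ℝ)+2) ^ 5) ∂P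
          ≤ ∑' k : ℕ, ENNReal.ofReal (C * (((k:ℝ)+1) ^ 2 / ((k:ℝ)+2) ^ 5)) :=
            ENNReal.tsum_le_tsum h2
        _ = ENNReal.ofReal (∑' k : ℕ, C * (((k:ℝ)+1) ^ 2 / ((k:ℝ)+2) ^ 5)) :=
            (ENNReal.ofReal_tsum_of_nonneg (fun k => by positivity) hb_sum).symm
        _ < ⊤ := ENNReal.ofReal_lt_top
    exact hcalc.ne
  -- the dominating random variable
  refine ⟨fun ω => 1 + v * d + (F ω).toReal, fun ω => by positivity, ?_, ?_⟩
  · exact (integrable_const _).add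
      (integrable_toReal_of_lintegral_ne_top hF_meas.aemeasurable hFlint)
  · filter_upwards [ae_lt_top hF_meas hFlint] with ω hω T hT
    set W := 1 + v * d + (F ω).toReal with hW_def
    have hvd : (0:ℝ) ≤ v * d := by positivity
    have hW1 : 1 ≤ W := by
      rw [hW_def]
      have := ENNReal.toReal_nonneg (a := F ω)
      linarith
    have hW0 : 0 ≤ W := by linarith
    have hT1 : (1:ℝ) ≤ (T:ℝ) + 1 := by
      have := Nat.cast_nonneg (α := ℝ) T; linarith
    -- partial sums bounded by F
    have hpartial : ∑ n ∈ Finset.Icc 1 T, ‖G n ω‖ ^ 2 / ((n:ℝ)+1) ^ 5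
        ≤ (F ω).toReal := by
      have hre : ∑ n ∈ Finset.Icc 1 T, ‖G n ω‖ ^ 2 / ((n:ℝ)+1) ^ 5
          = ∑ k ∈ Finset.range T, ‖G (k+1) ω‖ ^ 2 / ((k:ℝ)+2) ^ 5 := by
        rw [show Finset.Icc 1 T = Finset.Ico 1 (T+1) from by
            rw [Finset.Ico_add_one_right_eq_Icc], Finset.sum_Ico_eq_sum_range]
        simp only [Nat.add_sub_cancel]
        apply Finset.sum_congr rfl
        intro k _
        have h2 : ((1+k:ℕ):ℝ) + 1 = (k:ℝ) + 2 := by push_cast; ring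
        rw [show 1+k = k+1 from by omega]
        push_cast
        ring_nf
      rw [hre]
      have h1 : ENNReal.ofReal (∑ k ∈ Finset.range T,
          ‖G (k+1) ω‖ ^ 2 / ((k:ℝ)+2) ^ 5) ≤ F ω := by
        rw [ENNReal.ofReal_sum_of_nonneg (fun k _ => by positivity)]
        exact ENNReal.sum_le_tsum _
      calc ∑ k ∈ Finset.range T, ‖G (k+1) ω‖ ^ 2 / ((k:ℝ)+2) ^ 5
          = (ENNReal.ofReal (∑ k ∈ Finset.range T,
              ‖G (k+1) ω‖ ^ 2 / ((k:ℝ)+2) ^ 5)).toReal := by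
            rw [ENNReal.toReal_ofReal (by positivity)]
        _ ≤ (F ω).toReal := ENNReal.toReal_mono hω.ne h1
    have hT5 : (1:ℝ) ≤ ((T:ℝ)+1) ^ 5 := by
      have := pow_le_pow_left₀ (by norm_num : (0:ℝ) ≤ 1) hT1 5
      simpa using this
    have hT8 : ((T:ℝ)+1) ^ 5 ≤ ((T:ℝ)+1) ^ 8 :=
      pow_le_pow_right₀ (by linarith) (by norm_num)
    -- bound the weighted sum
    have hsum_le : ∑ n ∈ Finset.Icc 1 T, ‖G n ω‖ ^ 2
        ≤ ((T:ℝ)+1) ^ 5 * ∑ n ∈ Finset.Icc 1 T, ‖G n ω‖ ^ 2 / ((n:ℝ)+1) ^ 5 := by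
      rw [Finset.mul_sum]
      apply Finset.sum_le_sum
      intro n hn
      have hnT : n ≤ T := (Finset.mem_Icc.mp hn).2
      have hn1T : ((n:ℝ)+1) ^ 5 ≤ ((T:ℝ)+1) ^ 5 := by
        apply pow_le_pow_left₀ (by positivity)
        have : (n:ℝ) ≤ (T:ℝ) := by exact_mod_cast hnT
        linarith
      have hden : (0:ℝ) < ((n:ℝ)+1) ^ 5 := by positivity
      calc ‖G n ω‖ ^ 2 = ‖G n ω‖ ^ 2 / ((n:ℝ)+1) ^ 5 * ((n:ℝ)+1) ^ 5 := by
            field_simp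
        _ ≤ ‖G n ω‖ ^ 2 / ((n:ℝ)+1) ^ 5 * ((T:ℝ)+1) ^ 5 :=
            mul_le_mul_of_nonneg_left hn1T (by positivity)
        _ = ((T:ℝ)+1) ^ 5 * (‖G n ω‖ ^ 2 / ((n:ℝ)+1) ^ 5) := by ring
    have hFt0 : 0 ≤ (F ω).toReal := ENNReal.toReal_nonneg
    have htotal : v * d + ∑ n ∈ Finset.Icc 1 T, ‖G n ω‖ ^ 2
        ≤ (((T:ℝ)+1) ^ 4 * W) ^ 2 := by
      have h3 : ((T:ℝ)+1) ^ 5 * ∑ n ∈ Finset.Icc 1 T, ‖G n ω‖ ^ 2 / ((n:ℝ)+1) ^ 5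
          ≤ ((T:ℝ)+1) ^ 5 * (F ω).toReal :=
        mul_le_mul_of_nonneg_left hpartial (by positivity)
      have h4 : v * d + ∑ n ∈ Finset.Icc 1 T, ‖G n ω‖ ^ 2
          ≤ ((T:ℝ)+1) ^ 5 * W := by
        rw [hW_def]
        nlinarith [hsum_le]
      have h5 : ((T:ℝ)+1) ^ 5 * W ≤ ((T:ℝ)+1) ^ 8 * W ^ 2 := by
        nlinarith [mul_le_mul_of_nonneg_left hW1 hW0]
      have h6 : (((T:ℝ)+1) ^ 4 * W) ^ 2 = ((T:ℝ)+1) ^ 8 * W ^ 2 := by ring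
      linarith
    have hfin := Real.sqrt_le_sqrt htotal
    rwa [Real.sqrt_sq (by positivity)] at hfin
end
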